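/- Let m be a strictly positive integer, let u, u* ∈ {0,1}^m, and let a < b be indices in {1,…,m} such that: u_j = 0 for all a ≤ j < b, u_b = 1, u*_a = 1, u*_b = 0, and u*_j = u_j for all j ∉ {a,b} (that is, u* is obtained from u by moving the 1 in position b to an earlier position a, where u has no ones in positions a,…,b−1). Then Rel(C^{u*}; p) ≤ Rel(C^u; p) for all p ∈ [0,1]. -/

import Mathlib

/-- Reliability of the elementary networks: `g false p = p²` (series),
`g true p = 1 - (1-p)²` (parallel). -/
def g (b : Bool) (p : ℝ) : ℝ := if b then 1 - (1 - p)^2 else p^2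

/-- Reliability polynomial of the composition `C^u`,
`Rel(C^u;p) = (g_{u_1} ∘ ⋯ ∘ g_{u_m})(p)`. -/
def RelC (m : ℕ) (u : Fin m → Bool) (p : ℝ) : ℝ :=
  (List.finRange m).foldr (fun i q => g (u i) q) p

/-- Support of a binary vector. -/
def supp (m : ℕ) (u : Fin m → Bool) : Finset (Fin m) :=
  Finset.univ.filter (fun i => u i = true)

/-- Rank function `ρ(u) = ∑_{i ∈ supp u} i`, with 1-based index values. -/
def rho (m : ℕ) (u : Fin m → Bool) : ℕ :=
  ∑ i ∈ supp m u, ((i : ℕ) + 1)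

/-- The support of `u`, sorted increasingly. -/
def sortedSupp (m : ℕ) (u : Fin m → Bool) : List (Fin m) :=
  Finset.sort (supp m u) (· ≤ ·)

/-- The order `≼_H`: same Hamming weight and `s_i ≤ t_i` for every `i`. -/
def relH (m : ℕ) (u v : Fin m → Bool) : Prop :=
  (supp m u).card = (supp m v).card ∧
    ∀ (i : ℕ) (hu : i < (sortedSupp m u).length) (hv : i < (sortedSupp m v).length),
      (sortedSupp m u).get ⟨i, hu⟩ ≤ (sortedSupp m v).get ⟨i, hv⟩

/-- The order `≼_SH`. -/
def relSH (m : ℕ) (u v : Fin m → Bool) : Prop :=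
  ((supp m u).card ≠ (supp m v).card ∧ supp m u ⊆ supp m v) ∨ relH m u v

/-- The partial order generated by `≼_SH` (reflexive–transitive closure). -/
def leSH (m : ℕ) (u v : Fin m → Bool) : Prop :=
  Relation.ReflTransGen (relSH m) u v

section Aux

/-- Partial composition: fold over the suffix of `finRange m` starting at `j`. -/
def Tpart (m : ℕ) (u : Fin m → Bool) (p : ℝ) (j : ℕ) : ℝ :=
  ((List.finRange m).drop j).foldr (fun i q => g (u i) q) p

lemma Tpart_zero (m : ℕ) (u : Fin m → Bool) (p : ℝ) : Tpart m u p 0 = RelC m u p := rfl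

lemma Tpart_of_ge (m : ℕ) (u : Fin m → Bool) (p : ℝ) {j : ℕ} (h : m ≤ j) :
    Tpart m u p j = p := by
  unfold Tpart
  rw [List.drop_eq_nil_of_le (by simpa using h)]
  rfl

lemma Tpart_succ (m : ℕ) (u : Fin m → Bool) (p : ℝ) {j : ℕ} (h : j < m) :
    Tpart m u p j = g (u ⟨j, h⟩) (Tpart m u p (j + 1)) := by
  unfold Tpart
  rw [List.drop_eq_getElem_cons (by simpa using h), List.foldr_cons,
    List.getElem_finRange]
  rfl

lemma g_mem {b : Bool} {p : ℝ} (hp : p ∈ Set.Icc (0:ℝ) 1) : g b p ∈ Set.Icc (0:ℝ) 1 := by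
  obtain ⟨h0, h1⟩ := hp
  cases b <;> simp only [g, if_true, if_false, Bool.false_eq_true] <;>
    constructor <;> nlinarith

lemma g_mono {b : Bool} {p q : ℝ} (h0 : 0 ≤ p) (h1 : q ≤ 1) (hpq : p ≤ q) :
    g b p ≤ g b q := by
  cases b <;> simp only [g, if_true, if_false, Bool.false_eq_true] <;> nlinarith

lemma g_swap {q : ℝ} (hq : q ∈ Set.Icc (0:ℝ) 1) :
    g true (g false q) ≤ g false (g true q) := by
  obtain ⟨h0, h1⟩ := hq
  simp only [g, if_true, if_false, Bool.false_eq_true]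
  nlinarith [sq_nonneg (q * (1 - q))]

lemma g0_iter_mem {q : ℝ} (hq : q ∈ Set.Icc (0:ℝ) 1) (n : ℕ) :
    (g false)^[n] q ∈ Set.Icc (0:ℝ) 1 := by
  induction n with
  | zero => simpa using hq
  | succ n ih => rw [Function.iterate_succ_apply']; exact g_mem ih

lemma g0_iter_mono {x y : ℝ} (hx : x ∈ Set.Icc (0:ℝ) 1) (hy : y ∈ Set.Icc (0:ℝ) 1)
    (hxy : x ≤ y) (n : ℕ) : (g false)^[n] x ≤ (g false)^[n] y := by
  induction n with
  | zero => simpa using hxy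
  | succ n ih =>
    rw [Function.iterate_succ_apply', Function.iterate_succ_apply']
    exact g_mono (g0_iter_mem hx n).1 (g0_iter_mem hy n).2 ih

lemma key_swap {q : ℝ} (hq : q ∈ Set.Icc (0:ℝ) 1) (n : ℕ) :
    g true ((g false)^[n] q) ≤ (g false)^[n] (g true q) := by
  induction n generalizing q with
  | zero => simp
  | succ n ih =>
    rw [Function.iterate_succ_apply]
    calc g true ((g false)^[n] (g false q)) ≤ (g false)^[n] (g true (g false q)) :=
          ih (g_mem hq)
      _ ≤ (g false)^[n] (g false (g true q)) :=
          g0_iter_mono (g_mem (g_mem hq)) (g_mem (g_mem hq)) (g_swap hq) n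
      _ = (g false)^[n + 1] (g true q) := (Function.iterate_succ_apply _ _ _).symm

lemma Tpart_mem (m : ℕ) (u : Fin m → Bool) {p : ℝ} (hp : p ∈ Set.Icc (0:ℝ) 1) :
    ∀ k j, m ≤ j + k → Tpart m u p j ∈ Set.Icc (0:ℝ) 1 := by
  intro k
  induction k with
  | zero => intro j hj; rw [Tpart_of_ge m u p (by omega)]; exact hp
  | succ k ih =>
    intro j hj
    by_cases h : j < m
    · rw [Tpart_succ m u p h]
      exact g_mem (ih (j + 1) (by omega))
    · rw [Tpart_of_ge m u p (by omega)]; exact hp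

end Aux

/-- moving a single `1` from position `b` to an earlier position `a`
(with no ones of `u` in positions `a, …, b-1`) decreases the reliability pointwise. -/
theorem rel_le_of_move_one_left (m : ℕ) (hm : 0 < m) (u ustar : Fin m → Bool)
    (a b : Fin m) (hab : a < b)
    (hzero : ∀ j : Fin m, a ≤ j → j < b → u j = false)
    (hub : u b = true)
    (hua : ustar a = true) (hubstar : ustar b = false)
    (hsame : ∀ j : Fin m, j ≠ a → j ≠ b → ustar j = u j) :
    ∀ p ∈ Set.Icc (0:ℝ) 1, RelC m ustar p ≤ RelC m u p := by
  intro p hp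
  have hmem := Tpart_mem m u (p := p) hp
  have hmems := Tpart_mem m ustar (p := p) hp
  have hbm : (b : ℕ) < m := b.isLt
  -- the two folds agree strictly after position b
  have hagree : ∀ k j, m ≤ j + k → (b : ℕ) < j → Tpart m ustar p j = Tpart m u p j := by
    intro k
    induction k with
    | zero =>
      intro j hj hbj
      rw [Tpart_of_ge m _ p (by omega), Tpart_of_ge m _ p (by omega)]
    | succ k ih =>
      intro j hj hbj
      by_cases h : j < m
      · rw [Tpart_succ m ustar p h, Tpart_succ m u p h, ih (j+1) (by omega) (by omega),
          hsame ⟨j, h⟩ (by simp [Fin.ext_iff]; omega) (by simp [Fin.ext_iff]; omega)]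
      · rw [Tpart_of_ge m _ p (by omega), Tpart_of_ge m _ p (by omega)]
  set q : ℝ := Tpart m u p ((b : ℕ) + 1) with hqdef
  have hq : q ∈ Set.Icc (0:ℝ) 1 := hmem m _ (by omega)
  have hqs : Tpart m ustar p ((b : ℕ) + 1) = q := hagree m _ (by omega) (by omega)
  have habn : (a : ℕ) < (b : ℕ) := hab
  -- values of the ustar-fold inside the gap
  have hS : ∀ k, k < (b : ℕ) - (a : ℕ) →
      Tpart m ustar p ((b : ℕ) - k) = (g false)^[k + 1] q := by
    intro k
    induction k with
    | zero =>
      intro _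
      have : (b : ℕ) - 0 = (b : ℕ) := rfl
      rw [this, Tpart_succ m ustar p hbm, hqs]
      have hb' : (⟨(b : ℕ), hbm⟩ : Fin m) = b := by simp [Fin.ext_iff]
      rw [hb', hubstar]
      simp
    | succ k ih =>
      intro hk
      have hjm : (b : ℕ) - (k + 1) < m := by omega
      rw [Tpart_succ m ustar p hjm]
      have h1 : (b : ℕ) - (k + 1) + 1 = (b : ℕ) - k := by omega
      rw [h1, ih (by omega)]
      have hja : (⟨(b : ℕ) - (k+1), hjm⟩ : Fin m) ≠ a := by simp [Fin.ext_iff]; omega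
      have hjb : (⟨(b : ℕ) - (k+1), hjm⟩ : Fin m) ≠ b := by simp [Fin.ext_iff]; omega
      have hle : a ≤ (⟨(b : ℕ) - (k+1), hjm⟩ : Fin m) := by
        rw [Fin.le_def]; simp; omega
      have hlt : (⟨(b : ℕ) - (k+1), hjm⟩ : Fin m) < b := by
        rw [Fin.lt_def]; simp; omega
      rw [hsame _ hja hjb, hzero _ hle hlt, ← Function.iterate_succ_apply' (g false)]
  -- values of the u-fold inside the gap
  have hU : ∀ k, k ≤ (b : ℕ) - (a : ℕ) →
      Tpart m u p ((b : ℕ) - k) = (g false)^[k] (g true q) := by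
    intro k
    induction k with
    | zero =>
      intro _
      have : (b : ℕ) - 0 = (b : ℕ) := rfl
      rw [this, Tpart_succ m u p hbm]
      have hb' : (⟨(b : ℕ), hbm⟩ : Fin m) = b := by simp [Fin.ext_iff]
      rw [hb', hub]
      simp [hqdef]
    | succ k ih =>
      intro hk
      have hjm : (b : ℕ) - (k + 1) < m := by omega
      rw [Tpart_succ m u p hjm]
      have h1 : (b : ℕ) - (k + 1) + 1 = (b : ℕ) - k := by omega
      rw [h1, ih (by omega)]
      have hle : a ≤ (⟨(b : ℕ) - (k+1), hjm⟩ : Fin m) := by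
        rw [Fin.le_def]; simp; omega
      have hlt : (⟨(b : ℕ) - (k+1), hjm⟩ : Fin m) < b := by
        rw [Fin.lt_def]; simp; omega
      rw [hzero _ hle hlt, ← Function.iterate_succ_apply' (g false)]
  have ham : (a : ℕ) < m := a.isLt
  -- value of the ustar-fold at a
  have hSa : Tpart m ustar p (a : ℕ) = g true ((g false)^[(b : ℕ) - (a : ℕ)] q) := by
    rw [Tpart_succ m ustar p ham]
    have ha' : (⟨(a : ℕ), ham⟩ : Fin m) = a := by simp [Fin.ext_iff]
    rw [ha', hua]
    have h1 : (a : ℕ) + 1 = (b : ℕ) - ((b : ℕ) - (a : ℕ) - 1) := by omega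
    rw [h1, hS ((b : ℕ) - (a : ℕ) - 1) (by omega)]
    have h2 : (b : ℕ) - (a : ℕ) - 1 + 1 = (b : ℕ) - (a : ℕ) := by omega
    rw [h2]
  have hUa : Tpart m u p (a : ℕ) = (g false)^[(b : ℕ) - (a : ℕ)] (g true q) := by
    have h1 := hU ((b : ℕ) - (a : ℕ)) le_rfl
    rw [show (b : ℕ) - ((b : ℕ) - (a : ℕ)) = (a : ℕ) by omega] at h1
    exact h1
  have hstart : Tpart m ustar p (a : ℕ) ≤ Tpart m u p (a : ℕ) := by
    rw [hSa, hUa]; exact key_swap hq _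
  -- propagate the inequality down to 0
  have hdown : ∀ k, k ≤ (a : ℕ) →
      Tpart m ustar p ((a : ℕ) - k) ≤ Tpart m u p ((a : ℕ) - k) := by
    intro k
    induction k with
    | zero => intro _; exact hstart
    | succ k ih =>
      intro hk
      have hjm : (a : ℕ) - (k + 1) < m := by omega
      rw [Tpart_succ m ustar p hjm, Tpart_succ m u p hjm]
      have h1 : (a : ℕ) - (k + 1) + 1 = (a : ℕ) - k := by omega
      have hja : (⟨(a : ℕ) - (k+1), hjm⟩ : Fin m) ≠ a := by simp [Fin.ext_iff]; omega
      have hjb : (⟨(a : ℕ) - (k+1), hjm⟩ : Fin m) ≠ b := by simp [Fin.ext_iff]; omega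
      rw [hsame _ hja hjb, h1]
      exact g_mono (hmems m _ (by omega)).1 (hmem m _ (by omega)).2 (ih (by omega))
  have := hdown (a : ℕ) le_rfl
  simpa [Tpart_zero] using this
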